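/- Let d ∈ ℕ with d ≥ 1, let Σ and Σ^π be symmetric positive definite d×d real matrices, and let M be a d×d real matrix with ‖(Σ^π)^{1/2} M (Σ^π)^{-1/2}‖_2 ≤ 1. Let ΔX and ΔY be d×d real matrices, and suppose M̂ := (Σ^{-1} + ΔX)(ΣM + ΔY). Set κ_1 := ‖Σ^{-1/2}Σ^πΣ^{-1/2}‖_2 · ‖Σ^{1/2}(Σ^π)^{-1}Σ^{1/2}‖_2 (the condition number of Σ^{-1/2}Σ^πΣ^{-1/2}). Then ‖(Σ^π)^{1/2} (M̂ − M) (Σ^π)^{-1/2}‖_2 ≤ √κ_1 · ( (1 + ‖Σ^{1/2} (ΔX) Σ^{1/2}‖_2)(1 + ‖Σ^{-1/2} (ΔY) Σ^{-1/2}‖_2) − 1 ). -/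

import Mathlib

open Matrix

namespace Matrix.PosSemidef

/-- The positive semidefinite square root, as `Matrix.PosSemidef.sqrt` was defined in older Mathlib. -/
noncomputable def sqrt {n : Type*} [Fintype n] [DecidableEq n] {A : Matrix n n ℝ}
    (hA : A.PosSemidef) : Matrix n n ℝ :=
  (hA.1.eigenvectorUnitary : Matrix n n ℝ) * diagonal ((↑) ∘ (√·) ∘ hA.1.eigenvalues) *
    (star hA.1.eigenvectorUnitary : Matrix n n ℝ)

end Matrix.PosSemidef

lemma sqrt_mul_self_aux {n : Type*} [Fintype n] [DecidableEq n] {A : Matrix n n ℝ}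
    (hA : A.PosSemidef) : hA.sqrt * hA.sqrt = A := by
  have hU : (star hA.1.eigenvectorUnitary : Matrix n n ℝ) * (hA.1.eigenvectorUnitary : Matrix n n ℝ) = 1 :=
    Unitary.star_mul_self_of_mem hA.1.eigenvectorUnitary.prop
  have hD : diagonal ((↑) ∘ (√·) ∘ hA.1.eigenvalues) * diagonal ((↑) ∘ (√·) ∘ hA.1.eigenvalues)
      = diagonal (RCLike.ofReal ∘ hA.1.eigenvalues : n → ℝ) := by
    rw [diagonal_mul_diagonal]; congr 1; funext i
    simp [Real.mul_self_sqrt (hA.eigenvalues_nonneg i)]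
  conv_rhs => rw [hA.1.spectral_theorem]
  unfold Matrix.PosSemidef.sqrt
  rw [Unitary.conjStarAlgAut_apply, ← hD]
  simp only [Matrix.mul_assoc]
  rw [← Matrix.mul_assoc (star _) _ (diagonal _ * _), hU, Matrix.one_mul]

lemma sqrt_isHermitian_aux {n : Type*} [Fintype n] [DecidableEq n] {A : Matrix n n ℝ}
    (hA : A.PosSemidef) : (hA.sqrt)ᴴ = hA.sqrt := by
  unfold Matrix.PosSemidef.sqrt
  simp [Matrix.star_eq_conjTranspose, Matrix.mul_assoc]

/-- The spectral norm (ℓ²→ℓ² operator norm) of a real square matrix. -/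
noncomputable def specNorm {d : ℕ} (A : Matrix (Fin d) (Fin d) ℝ) : ℝ :=
  ‖Matrix.toEuclideanCLM (𝕜 := ℝ) A‖

lemma specNorm_nonneg {d : ℕ} (A : Matrix (Fin d) (Fin d) ℝ) : 0 ≤ specNorm A :=
  norm_nonneg _

lemma specNorm_mul_le {d : ℕ} (A B : Matrix (Fin d) (Fin d) ℝ) :
    specNorm (A * B) ≤ specNorm A * specNorm B := by
  unfold specNorm; rw [_root_.map_mul]; exact norm_mul_le _ _

lemma specNorm_add_le {d : ℕ} (A B : Matrix (Fin d) (Fin d) ℝ) :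
    specNorm (A + B) ≤ specNorm A + specNorm B := by
  unfold specNorm; rw [_root_.map_add]; exact norm_add_le _ _

open scoped Matrix.Norms.L2Operator in
lemma specNorm_star_mul_self {d : ℕ} (A : Matrix (Fin d) (Fin d) ℝ) :
    specNorm (star A * A) = specNorm A * specNorm A := by
  unfold specNorm
  rw [← Matrix.cstar_norm_def, ← Matrix.cstar_norm_def, Matrix.star_eq_conjTranspose,
    Matrix.l2_opNorm_conjTranspose_mul_self]

open scoped Matrix.Norms.L2Operator in
lemma specNorm_self_mul_star {d : ℕ} (A : Matrix (Fin d) (Fin d) ℝ) :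
    specNorm (A * star A) = specNorm A * specNorm A := by
  unfold specNorm
  rw [← Matrix.cstar_norm_def, ← Matrix.cstar_norm_def, Matrix.star_eq_conjTranspose]
  have h := Matrix.l2_opNorm_conjTranspose_mul_self Aᴴ
  rw [Matrix.conjTranspose_conjTranspose, Matrix.l2_opNorm_conjTranspose] at h
  exact h

/-- **Error bound for the empirical conditional mean embedding.**
If `M̂ = (Σ⁻¹ + ΔX)(ΣM + ΔY)` and `‖(Σ^π)^{1/2} M (Σ^π)^{-1/2}‖₂ ≤ 1`, then
`‖(Σ^π)^{1/2}(M̂ − M)(Σ^π)^{-1/2}‖₂ ≤ √κ₁ ((1 + ‖Σ^{1/2}ΔX Σ^{1/2}‖₂)(1 + ‖Σ^{-1/2}ΔY Σ^{-1/2}‖₂) − 1)`,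
where `κ₁` is the condition number of `Σ^{-1/2} Σ^π Σ^{-1/2}`. -/
theorem embedding_error_bound (d : ℕ) (hd : 1 ≤ d)
    (S Spi : Matrix (Fin d) (Fin d) ℝ) (hS : S.PosDef) (hSpi : Spi.PosDef)
    (M : Matrix (Fin d) (Fin d) ℝ)
    (hcontr : specNorm (hSpi.posSemidef.sqrt * M * (hSpi.posSemidef.sqrt)⁻¹) ≤ 1)
    (ΔX ΔY Mhat : Matrix (Fin d) (Fin d) ℝ)
    (hMhat : Mhat = (S⁻¹ + ΔX) * (S * M + ΔY))
    (κ1 : ℝ)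
    (hκ1 : κ1 = specNorm ((hS.posSemidef.sqrt)⁻¹ * Spi * (hS.posSemidef.sqrt)⁻¹)
        * specNorm (hS.posSemidef.sqrt * Spi⁻¹ * hS.posSemidef.sqrt)) :
    specNorm (hSpi.posSemidef.sqrt * (Mhat - M) * (hSpi.posSemidef.sqrt)⁻¹)
      ≤ Real.sqrt κ1
        * ((1 + specNorm (hS.posSemidef.sqrt * ΔX * hS.posSemidef.sqrt))
            * (1 + specNorm ((hS.posSemidef.sqrt)⁻¹ * ΔY * (hS.posSemidef.sqrt)⁻¹)) - 1) := by
  set A := hS.posSemidef.sqrt with hAdef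
  set P := hSpi.posSemidef.sqrt with hPdef
  have hAA : A * A = S := sqrt_mul_self_aux hS.posSemidef
  have hPP : P * P = Spi := sqrt_mul_self_aux hSpi.posSemidef
  have hAH : Aᴴ = A := sqrt_isHermitian_aux hS.posSemidef
  have hPH : Pᴴ = P := sqrt_isHermitian_aux hSpi.posSemidef
  -- invertibility
  have hdetA : IsUnit A.det := by
    have : A.det * A.det = S.det := by rw [← det_mul, hAA]
    refine isUnit_iff_ne_zero.2 fun h => ?_
    exact hS.det_pos.ne' (by rw [← this, h, mul_zero])
  have hdetP : IsUnit P.det := by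
    have : P.det * P.det = Spi.det := by rw [← det_mul, hPP]
    refine isUnit_iff_ne_zero.2 fun h => ?_
    exact hSpi.det_pos.ne' (by rw [← this, h, mul_zero])
  have hAi : A * A⁻¹ = 1 := Matrix.mul_nonsing_inv _ hdetA
  have hAi' : A⁻¹ * A = 1 := Matrix.nonsing_inv_mul _ hdetA
  have hPi : P * P⁻¹ = 1 := Matrix.mul_nonsing_inv _ hdetP
  have hPi' : P⁻¹ * P = 1 := Matrix.nonsing_inv_mul _ hdetP
  have hSinv : S⁻¹ = A⁻¹ * A⁻¹ := by rw [← hAA, Matrix.mul_inv_rev]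
  have hSpiinv : Spi⁻¹ = P⁻¹ * P⁻¹ := by rw [← hPP, Matrix.mul_inv_rev]
  have hc1 : ∀ X : Matrix (Fin d) (Fin d) ℝ, A⁻¹ * (A * X) = X := fun X => by
    rw [← Matrix.mul_assoc, hAi', Matrix.one_mul]
  have hc2 : ∀ X : Matrix (Fin d) (Fin d) ℝ, A * (A⁻¹ * X) = X := fun X => by
    rw [← Matrix.mul_assoc, hAi, Matrix.one_mul]
  have hc3 : ∀ X : Matrix (Fin d) (Fin d) ℝ, P⁻¹ * (P * X) = X := fun X => by
    rw [← Matrix.mul_assoc, hPi', Matrix.one_mul]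
  have hc4 : ∀ X : Matrix (Fin d) (Fin d) ℝ, P * (P⁻¹ * X) = X := fun X => by
    rw [← Matrix.mul_assoc, hPi, Matrix.one_mul]
  -- decomposition
  have hD : P * (Mhat - M) * P⁻¹ =
      (P * A⁻¹) * (A⁻¹ * ΔY * A⁻¹) * (A * P⁻¹)
      + (P * A⁻¹) * (A * ΔX * A) * (A * P⁻¹) * (P * M * P⁻¹)
      + (P * A⁻¹) * (A * ΔX * A) * (A⁻¹ * ΔY * A⁻¹) * (A * P⁻¹) := by
    rw [hMhat, hSinv, ← hAA]
    simp only [Matrix.mul_add, Matrix.add_mul, Matrix.mul_sub, Matrix.sub_mul,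
      Matrix.mul_assoc, hc1, hc2, hc3, hc4]
    abel
  set c1 := specNorm (P * A⁻¹) with hc1def
  set c2 := specNorm (A * P⁻¹) with hc2def
  set x := specNorm (A * ΔX * A) with hxdef
  set y := specNorm (A⁻¹ * ΔY * A⁻¹) with hydef
  have hx0 : 0 ≤ x := specNorm_nonneg _
  have hy0 : 0 ≤ y := specNorm_nonneg _
  have hc10 : 0 ≤ c1 := specNorm_nonneg _
  have hc20 : 0 ≤ c2 := specNorm_nonneg _
  -- star facts
  have hstarPA : star (P * A⁻¹) = A⁻¹ * P := by
    rw [Matrix.star_eq_conjTranspose, Matrix.conjTranspose_mul,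
      Matrix.conjTranspose_nonsing_inv, hAH, hPH]
  have hstarAP : star (A * P⁻¹) = P⁻¹ * A := by
    rw [Matrix.star_eq_conjTranspose, Matrix.conjTranspose_mul,
      Matrix.conjTranspose_nonsing_inv, hAH, hPH]
  have e1 : A⁻¹ * Spi * A⁻¹ = (A⁻¹ * P) * (P * A⁻¹) := by
    rw [← hPP]; simp only [Matrix.mul_assoc]
  have e2 : A * Spi⁻¹ * A = (A * P⁻¹) * (P⁻¹ * A) := by
    rw [hSpiinv]; simp only [Matrix.mul_assoc]
  have hc1sq : specNorm (A⁻¹ * Spi * A⁻¹) = c1 * c1 := by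
    rw [e1, ← hstarPA, specNorm_star_mul_self]
  have hc2sq : specNorm (A * Spi⁻¹ * A) = c2 * c2 := by
    rw [e2, ← hstarAP, specNorm_self_mul_star]
  have hκ : κ1 = (c1 * c2) ^ 2 := by rw [hκ1, hc1sq, hc2sq]; ring
  have hsqrt : Real.sqrt κ1 = c1 * c2 := by
    rw [hκ, Real.sqrt_sq (mul_nonneg hc10 hc20)]
  -- bounds on the three terms
  have hT1 : specNorm ((P * A⁻¹) * (A⁻¹ * ΔY * A⁻¹) * (A * P⁻¹)) ≤ c1 * y * c2 :=
    le_trans (specNorm_mul_le _ _)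
      (mul_le_mul_of_nonneg_right
        (le_trans (specNorm_mul_le _ _) (le_refl _)) hc20)
  have hT2 : specNorm ((P * A⁻¹) * (A * ΔX * A) * (A * P⁻¹) * (P * M * P⁻¹))
      ≤ c1 * x * c2 := by
    calc specNorm ((P * A⁻¹) * (A * ΔX * A) * (A * P⁻¹) * (P * M * P⁻¹))
        ≤ specNorm ((P * A⁻¹) * (A * ΔX * A) * (A * P⁻¹)) * specNorm (P * M * P⁻¹) :=
          specNorm_mul_le _ _
      _ ≤ specNorm ((P * A⁻¹) * (A * ΔX * A) * (A * P⁻¹)) * 1 := by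
          refine mul_le_mul_of_nonneg_left hcontr (specNorm_nonneg _)
      _ = specNorm ((P * A⁻¹) * (A * ΔX * A) * (A * P⁻¹)) := mul_one _
      _ ≤ c1 * x * c2 :=
          le_trans (specNorm_mul_le _ _)
            (mul_le_mul_of_nonneg_right (specNorm_mul_le _ _) hc20)
  have hT3 : specNorm ((P * A⁻¹) * (A * ΔX * A) * (A⁻¹ * ΔY * A⁻¹) * (A * P⁻¹))
      ≤ c1 * x * y * c2 := by
    calc specNorm ((P * A⁻¹) * (A * ΔX * A) * (A⁻¹ * ΔY * A⁻¹) * (A * P⁻¹))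
        ≤ specNorm ((P * A⁻¹) * (A * ΔX * A) * (A⁻¹ * ΔY * A⁻¹)) * c2 :=
          specNorm_mul_le _ _
      _ ≤ specNorm ((P * A⁻¹) * (A * ΔX * A)) * y * c2 := by
          refine mul_le_mul_of_nonneg_right (specNorm_mul_le _ _) hc20
      _ ≤ c1 * x * y * c2 := by
          refine mul_le_mul_of_nonneg_right
            (mul_le_mul_of_nonneg_right (specNorm_mul_le _ _) hy0) hc20
  have htot : specNorm (P * (Mhat - M) * P⁻¹) ≤ c1 * y * c2 + c1 * x * c2 + c1 * x * y * c2 := by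
    rw [hD]
    calc specNorm (_ + _ + _)
        ≤ specNorm ((P * A⁻¹) * (A⁻¹ * ΔY * A⁻¹) * (A * P⁻¹)
            + (P * A⁻¹) * (A * ΔX * A) * (A * P⁻¹) * (P * M * P⁻¹))
          + specNorm ((P * A⁻¹) * (A * ΔX * A) * (A⁻¹ * ΔY * A⁻¹) * (A * P⁻¹)) :=
          specNorm_add_le _ _
      _ ≤ (specNorm ((P * A⁻¹) * (A⁻¹ * ΔY * A⁻¹) * (A * P⁻¹))
            + specNorm ((P * A⁻¹) * (A * ΔX * A) * (A * P⁻¹) * (P * M * P⁻¹)))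
          + specNorm ((P * A⁻¹) * (A * ΔX * A) * (A⁻¹ * ΔY * A⁻¹) * (A * P⁻¹)) := by
          exact add_le_add_left (specNorm_add_le _ _) _
      _ ≤ c1 * y * c2 + c1 * x * c2 + c1 * x * y * c2 :=
          add_le_add (add_le_add hT1 hT2) hT3
  rw [hsqrt]
  calc specNorm (P * (Mhat - M) * P⁻¹) ≤ c1 * y * c2 + c1 * x * c2 + c1 * x * y * c2 := htot
    _ = c1 * c2 * ((1 + x) * (1 + y) - 1) := by ring
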